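/- Let R be a commutative ring with unity and n ≥ 2. If M ∈ M_n(R) satisfies Tr M ≡ x_0^6 - 2x_1^3 + 3x_2^2 (mod 6R) for some x_0, x_1, x_2 ∈ R, then M is a sum of sixth powers of matrices in M_n(R). -/

import Mathlib

open Matrix

namespace SumSixAux

variable {R : Type*} [CommRing R]

/-- `X` is a sum of sixth powers of matrices. -/
def SumPow6 {m : Type*} [Fintype m] [DecidableEq m] (X : Matrix m m R) : Prop :=
  ∃ l : List (Matrix m m R), X = (l.map (· ^ 6)).sum

section Basic

variable {m : Type*} [Fintype m] [DecidableEq m]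

lemma SumPow6.zero : SumPow6 (0 : Matrix m m R) := ⟨[], rfl⟩

lemma SumPow6.add {X Y : Matrix m m R} (hX : SumPow6 X) (hY : SumPow6 Y) :
    SumPow6 (X + Y) := by
  obtain ⟨l1, rfl⟩ := hX
  obtain ⟨l2, rfl⟩ := hY
  exact ⟨l1 ++ l2, by simp⟩

lemma SumPow6.pow (A : Matrix m m R) : SumPow6 (A ^ 6) := ⟨[A], by simp⟩

lemma list_sum_fin {α : Type*} [AddCommMonoid α] (f : α → α) (l : List α) :
    (l.map f).sum = ∑ k : Fin l.length, f (l.get k) := by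
  induction l with
  | nil => simp
  | cons B t ih =>
      simp only [List.map_cons, List.sum_cons, List.length_cons, Fin.sum_univ_succ,
        List.get_cons_zero, ih]
      congr 1

lemma SumPow6.exists_fin {X : Matrix m m R} (hX : SumPow6 X) :
    ∃ (r : ℕ) (Ms : Fin r → Matrix m m R), X = ∑ i, (Ms i) ^ 6 := by
  obtain ⟨l, rfl⟩ := hX
  exact ⟨l.length, fun k => l.get k, list_sum_fin _ l⟩

end Basic

lemma pow_six_of_idem {S : Type*} [Monoid S] {B : S} (h : B * B = B) : B ^ 6 = B := by
  have h2 : B ^ 2 = B := by rw [sq, h]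
  calc B ^ 6 = (B ^ 2) ^ 3 := by rw [← pow_mul]
    _ = B ^ 3 := by rw [h2]
    _ = B ^ 2 * B := by rw [pow_succ]
    _ = B := by rw [h2, h]

/-- Every trace-zero 2×2 matrix is a sum of six sixth powers. -/
lemma sumPow6_traceZero (a b c : R) : SumPow6 (!![a, b; c, -a]) := by
  refine ⟨[!![a+1, 1; -(a*(a+1)), -a], !![0, b-1; 0, 1],
          !![1, 0; c + a*(a+1), 0], !![0, 0; 0, 1],
          !![0, 1; -1, 0], !![0, 1; -1, 0]], ?_⟩
  have h1 : (!![a+1, 1; -(a*(a+1)), -a] : Matrix (Fin 2) (Fin 2) R) ^ 6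
      = !![a+1, 1; -(a*(a+1)), -a] := by
    apply pow_six_of_idem
    ext i j
    fin_cases i <;> fin_cases j <;>
      simp [Matrix.mul_apply, Fin.sum_univ_two] <;> ring
  have h2 : (!![0, b-1; 0, 1] : Matrix (Fin 2) (Fin 2) R) ^ 6 = !![0, b-1; 0, 1] := by
    apply pow_six_of_idem
    ext i j
    fin_cases i <;> fin_cases j <;>
      simp [Matrix.mul_apply, Fin.sum_univ_two]
  have h3 : (!![1, 0; c + a*(a+1), 0] : Matrix (Fin 2) (Fin 2) R) ^ 6
      = !![1, 0; c + a*(a+1), 0] := by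
    apply pow_six_of_idem
    ext i j
    fin_cases i <;> fin_cases j <;>
      simp [Matrix.mul_apply, Fin.sum_univ_two]
  have h4 : (!![0, 0; 0, 1] : Matrix (Fin 2) (Fin 2) R) ^ 6 = !![0, 0; 0, 1] := by
    apply pow_six_of_idem
    ext i j
    fin_cases i <;> fin_cases j <;>
      simp [Matrix.mul_apply, Fin.sum_univ_two]
  have h5 : (!![0, 1; -1, 0] : Matrix (Fin 2) (Fin 2) R) ^ 6 = -1 := by
    have hs : (!![0, 1; -1, 0] : Matrix (Fin 2) (Fin 2) R) ^ 2 = -1 := by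
      rw [sq]
      ext i j
      fin_cases i <;> fin_cases j <;>
        simp [Matrix.mul_apply, Fin.sum_univ_two, Matrix.one_apply]
    calc (!![0, 1; -1, 0] : Matrix (Fin 2) (Fin 2) R) ^ 6
        = ((!![0, 1; -1, 0] : Matrix (Fin 2) (Fin 2) R) ^ 2) ^ 3 := by rw [← pow_mul]
      _ = (-1) ^ 3 := by rw [hs]
      _ = -1 := Odd.neg_one_pow ⟨1, rfl⟩
  simp only [List.map_cons, List.map_nil, List.sum_cons, List.sum_nil, h1, h2, h3, h4, h5]
  ext i j
  fin_cases i <;> fin_cases j <;>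
    simp [Matrix.one_apply] <;> ring

variable {n : ℕ}

def emb (i j : Fin n) (A : Matrix (Fin 2) (Fin 2) R) : Matrix (Fin n) (Fin n) R :=
  single i i (A 0 0) + single i j (A 0 1) +
    single j i (A 1 0) + single j j (A 1 1)

lemma emb_add (i j : Fin n) (A B : Matrix (Fin 2) (Fin 2) R) :
    emb i j (A + B) = emb i j A + emb i j B := by
  simp only [emb, Matrix.add_apply, single_add]
  abel

lemma emb_zero (i j : Fin n) : emb i j (0 : Matrix (Fin 2) (Fin 2) R) = 0 := by
  simp [emb]

lemma emb_mul {i j : Fin n} (hij : i ≠ j) (A B : Matrix (Fin 2) (Fin 2) R) :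
    emb i j (A * B) = emb i j A * emb i j B := by
  have e : ∀ (X Y : Matrix (Fin 2) (Fin 2) R) (p q : Fin 2),
      (X * Y) p q = X p 0 * Y 0 q + X p 1 * Y 1 q := by
    intro X Y p q
    rw [Matrix.mul_apply, Fin.sum_univ_two]
  simp only [emb, add_mul, mul_add, single_mul_single_same,
    single_mul_single_of_ne, hij, hij.symm, ne_eq, not_false_eq_true,
    e, single_add, add_zero, zero_add]
  abel

lemma emb_pow {i j : Fin n} (hij : i ≠ j) (A : Matrix (Fin 2) (Fin 2) R) (k : ℕ) :
    emb i j (A ^ (k + 1)) = emb i j A ^ (k + 1) := by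
  induction k with
  | zero => simp
  | succ m ih => rw [pow_succ, emb_mul hij, ih, ← pow_succ]

lemma emb_trace {i j : Fin n} (hij : i ≠ j) (A : Matrix (Fin 2) (Fin 2) R) :
    trace (emb i j A) = trace A := by
  simp [emb, trace_add, trace_single_eq_same,
    trace_single_eq_of_ne _ _ _ hij.symm, trace_single_eq_of_ne _ _ _ hij,
    trace_fin_two]

lemma SumPow6.emb_of {i j : Fin n} (hij : i ≠ j) {A : Matrix (Fin 2) (Fin 2) R}
    (hA : SumPow6 A) : SumPow6 (emb i j A) := by
  obtain ⟨l, rfl⟩ := hA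
  induction l with
  | nil => simpa [emb_zero] using SumPow6.zero
  | cons B t ih =>
      rw [List.map_cons, List.sum_cons, emb_add]
      refine SumPow6.add ?_ ih
      rw [show (6:ℕ) = 5 + 1 from rfl, emb_pow hij]
      exact SumPow6.pow _

lemma pow6 {S : Type*} [Monoid S] (A : S) : A ^ 6 = A * A * A * A * A * A := by
  rw [show (6:ℕ) = 5+1 from rfl, pow_succ, pow_succ, pow_succ, pow_succ, pow_succ, pow_one]

lemma trK (d : R) : trace ((!![0, 1; -d, 0] : Matrix (Fin 2) (Fin 2) R) ^ 6) = -2*d^3 := by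
  rw [pow6]
  simp only [Matrix.mul_fin_two]
  rw [Matrix.trace_fin_two_of]
  ring

lemma trC (d : R) : trace ((!![0, 1; -d, 1] : Matrix (Fin 2) (Fin 2) R) ^ 6)
    = 1 - 6*d + 9*d^2 - 2*d^3 := by
  rw [pow6]
  simp only [Matrix.mul_fin_two]
  rw [Matrix.trace_fin_two_of]
  ring

lemma trD (x : R) : trace ((!![x, 0; 0, 0] : Matrix (Fin 2) (Fin 2) R) ^ 6) = x^6 := by
  rw [pow6]
  simp only [Matrix.mul_fin_two]
  rw [Matrix.trace_fin_two_of]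
  ring

lemma stdBasis_sum {ι : Type*} [Fintype ι] (i0 j0 : Fin n) (f : ι → R) :
    ∑ i, single i0 j0 (f i) = single i0 j0 (∑ i, f i) := by
  ext p q
  simp only [Matrix.sum_apply, Matrix.single, Matrix.of_apply]
  by_cases h : i0 = p ∧ j0 = q <;> simp [h]

end SumSixAux

theorem sum_of_sixth_powers_n_by_n (R : Type*) [CommRing R] (n : ℕ) (hn : 2 ≤ n)
    (M : Matrix (Fin n) (Fin n) R)
    (h : ∃ x₀ x₁ x₂ : R,
      Matrix.trace M - (x₀ ^ 6 - 2 * x₁ ^ 3 + 3 * x₂ ^ 2)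
        ∈ Ideal.span ({6} : Set R)) :
    ∃ (r : ℕ) (Ms : Fin r → Matrix (Fin n) (Fin n) R), M = ∑ i, (Ms i) ^ 6 := by
  classical
  open SumSixAux in
  obtain ⟨x0, x1, x2, hmem⟩ := h
  rw [Ideal.mem_span_singleton] at hmem
  obtain ⟨u, hu⟩ := hmem
  set i0 : Fin n := ⟨0, by omega⟩ with hi0
  set i1 : Fin n := ⟨1, by omega⟩ with hi1
  have h01 : i0 ≠ i1 := by simp [hi0, hi1, Fin.ext_iff]
  set s : R := u - (2*x2^2 - 5*x2 + 3) with hs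
  set l2 : List (Matrix (Fin 2) (Fin 2) R) :=
    [!![x0, 0; 0, 0], !![0, 1; -x1, 0], !![0, 1; -(x2-1), 1], !![0, 1; -(-x2), 0],
     !![0, 1; -s, 1], !![0, 1; -(-s), 1], !![0, 1; -(s+1), 0], !![0, 1; -(1-s), 0],
     !![0, 1; -(1-s), 0], !![0, 1; -s, 0], !![0, 1; -(-1 : R), 0], !![0, 1; -(-1 : R), 0]]
    with hl2
  set W2 : Matrix (Fin 2) (Fin 2) R := (l2.map (· ^ 6)).sum with hW2def
  have hW2 : SumPow6 W2 := ⟨l2, rfl⟩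
  have htr : Matrix.trace W2 = x0^6 - 2*x1^3 + 3*x2^2 + 6*u := by
    rw [hW2def, hl2]
    simp only [List.map_cons, List.map_nil, List.sum_cons, List.sum_nil, add_zero,
      Matrix.trace_add, Matrix.trace_zero, trK, trC, trD]
    rw [hs]
    ring
  clear_value W2
  clear hW2def hl2
  set X : Matrix (Fin n) (Fin n) R := M - SumSixAux.emb i0 i1 W2 with hX
  have htrX : Matrix.trace X = 0 := by
    rw [hX, Matrix.trace_sub, emb_trace h01, htr]
    linear_combination hu
  have hdiag : ∑ i : Fin n, Matrix.single i0 i0 (X i i) = 0 := by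
    rw [stdBasis_sum]
    have : ∑ i : Fin n, X i i = 0 := htrX
    rw [this, Matrix.single_zero]
  have hneg : ∀ (p q : Fin n) (a : R),
      Matrix.single p q (-a) = -Matrix.single p q a := by
    intro p q a
    ext w v
    simp only [Matrix.single, Matrix.of_apply, Matrix.neg_apply]
    split_ifs <;> simp
  have hdecomp : M = SumSixAux.emb i0 i1 W2 + ∑ i : Fin n, ∑ j : Fin n,
      (Matrix.single i j (X i j) -
        if i = j then Matrix.single i0 i0 (X i j) else 0) := by
    have e1 : ∑ i : Fin n, ∑ j : Fin n,
        (Matrix.single i j (X i j) -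
          if i = j then Matrix.single i0 i0 (X i j) else 0)
        = X - ∑ i : Fin n, Matrix.single i0 i0 (X i i) := by
      rw [Finset.sum_congr rfl (fun i _ => Finset.sum_sub_distrib _ _),
        Finset.sum_sub_distrib _ _, ← Matrix.matrix_eq_sum_single X]
      congr 1
      apply Finset.sum_congr rfl
      intro i _
      simp [Finset.sum_ite_eq]
    rw [e1, hdiag, sub_zero, hX]
    abel
  clear_value X
  have hterm : ∀ i j : Fin n, SumPow6 (Matrix.single i j (X i j) -
      if i = j then Matrix.single i0 i0 (X i j) else 0) := by
    intro i j
    by_cases hij : i = j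
    · subst hij
      rw [if_pos rfl]
      by_cases hii : i = i0
      · subst hii
        rw [sub_self]
        exact SumPow6.zero
      · have hne : i0 ≠ i := fun hh => hii hh.symm
        have key : Matrix.single i i (X i i) - Matrix.single i0 i0 (X i i)
            = SumSixAux.emb i0 i !![-(X i i), 0; 0, X i i] := by
          have hk : SumSixAux.emb i0 i !![-(X i i), 0; 0, X i i]
              = Matrix.single i0 i0 (-(X i i)) + Matrix.single i0 i 0 +
                Matrix.single i i0 0 + Matrix.single i i (X i i) := rfl
          rw [hk, hneg, Matrix.single_zero, Matrix.single_zero]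
          abel
        rw [key]
        refine SumPow6.emb_of hne ?_
        have h0 := sumPow6_traceZero (R := R) (-(X i i)) 0 0
        rwa [neg_neg] at h0
    · rw [if_neg hij, sub_zero]
      have key : Matrix.single i j (X i j) = SumSixAux.emb i j !![0, X i j; 0, 0] := by
        have hk : SumSixAux.emb i j !![0, X i j; 0, 0]
            = Matrix.single i i 0 + Matrix.single i j (X i j) +
              Matrix.single j i 0 + Matrix.single j j 0 := rfl
        rw [hk, Matrix.single_zero, Matrix.single_zero,
          Matrix.single_zero]
        abel
      rw [key]
      refine SumPow6.emb_of hij ?_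
      have h0 := sumPow6_traceZero (R := R) 0 (X i j) 0
      rwa [neg_zero] at h0
  have hM : SumPow6 M := by
    rw [hdecomp]
    refine SumPow6.add (SumPow6.emb_of h01 hW2) ?_
    refine Finset.sum_induction _ _ (fun a b ha hb => SumPow6.add ha hb) SumPow6.zero ?_
    intro i _
    refine Finset.sum_induction _ _ (fun a b ha hb => SumPow6.add ha hb) SumPow6.zero ?_
    intro j _
    exact hterm i j
  exact hM.exists_fin
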